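/- arXiv:1803.05784 — 2 statements merged into one kernel-verified Lean document; each statement's English description precedes it below -/
import Mathlib

section
/- In the setting of the previous statement, Var(f̄(x)) = (1/(4λ^2))(2 - 2λx e^{-λx} - 2λ(1-x)e^{-λ(1-x)} - e^{-2λx} - e^{-2λ(1-x)}), and consequently E[(f̄(x) - (1+x))^2] = (1/(2λ^2))(1 - λx e^{-λx} - λ(1-x)e^{-λ(1-x)} - e^{-λ}). -/
open MeasureTheory ProbabilityTheory Real
open scoped NNReal ENNReal

lemma myexp_integral (h : ℝ → ℝ) (hm : Measurable h) :
    ∫ t, h t ∂(expMeasure 1) = ∫ t in Set.Ioi (0:ℝ), Real.exp (-t) * h t := by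
  have hpdf : ∀ t : ℝ, gammaPDFReal 1 1 t = if 0 ≤ t then Real.exp (-t) else 0 := by
    intro t
    simp [gammaPDFReal, Real.Gamma_one]
  have hrw : expMeasure 1
      = MeasureTheory.Measure.withDensity volume
        (fun t => ((Real.toNNReal (gammaPDFReal 1 1 t) : ℝ≥0) : ℝ≥0∞)) := rfl
  rw [hrw, integral_withDensity_eq_integral_smul
    (Measurable.real_toNNReal (measurable_gammaPDFReal 1 1)) h]
  have : ∀ t : ℝ, (Real.toNNReal (gammaPDFReal 1 1 t) : ℝ≥0) • h t
      = Set.indicator (Set.Ici (0:ℝ)) (fun t => Real.exp (-t) * h t) t := by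
    intro t
    by_cases ht : 0 ≤ t
    · simp [hpdf t, ht, Set.indicator_of_mem, Set.mem_Ici, NNReal.smul_def,
        Real.coe_toNNReal _ (Real.exp_nonneg _)]
    · simp [hpdf t, ht, Set.indicator_of_notMem, Set.mem_Ici]
  simp_rw [this]
  rw [integral_indicator measurableSet_Ici, integral_Ici_eq_integral_Ioi]


lemma myJ1 (a : ℝ) (ha : 0 ≤ a) :
    ∫ t in Set.Ioi (0:ℝ), Real.exp (-t) * max (a - t) 0 = a - 1 + Real.exp (-a) := by
  have hsplit : Set.Ioc (0:ℝ) a ∪ Set.Ioi a = Set.Ioi 0 := Set.Ioc_union_Ioi_eq_Ioi ha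
  have hcont : Continuous (fun t : ℝ => Real.exp (-t) * (a - t)) := by continuity
  have hint1 : IntegrableOn (fun t : ℝ => Real.exp (-t) * max (a - t) 0) (Set.Ioc 0 a) := by
    apply (hcont.integrableOn_Ioc).congr_fun (fun t ht => ?_) measurableSet_Ioc
    simp only [max_eq_left (by linarith [ht.2] : (0:ℝ) ≤ a - t)]
  have hzero : Set.EqOn (fun t : ℝ => Real.exp (-t) * max (a - t) 0) (fun _ => (0:ℝ))
      (Set.Ioi a) := by
    intro t ht
    simp only [Set.mem_Ioi] at ht
    simp [max_eq_right (by linarith : a - t ≤ (0:ℝ))]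
  have hint2 : IntegrableOn (fun t : ℝ => Real.exp (-t) * max (a - t) 0) (Set.Ioi a) :=
    (integrableOn_zero).congr_fun (fun t ht => (hzero ht).symm) measurableSet_Ioi
  rw [← hsplit, setIntegral_union (Set.Ioc_disjoint_Ioi le_rfl) measurableSet_Ioi hint1 hint2,
    setIntegral_congr_fun measurableSet_Ioi hzero]
  simp only [integral_zero, add_zero]
  have : ∫ t in Set.Ioc (0:ℝ) a, Real.exp (-t) * max (a - t) 0
      = ∫ t in (0:ℝ)..a, Real.exp (-t) * (a - t) := by
    rw [intervalIntegral.integral_of_le ha]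
    apply setIntegral_congr_fun measurableSet_Ioc
    intro t ht
    simp only [max_eq_left (by linarith [ht.2] : (0:ℝ) ≤ a - t)]
  rw [this]
  have hderiv : ∀ t ∈ Set.uIcc (0:ℝ) a,
      HasDerivAt (fun t : ℝ => (t - a + 1) * Real.exp (-t)) (Real.exp (-t) * (a - t)) t := by
    intro t _
    have h1 : HasDerivAt (fun t : ℝ => t - a + 1) 1 t :=
      ((hasDerivAt_id t).sub_const a).add_const 1
    have h2 : HasDerivAt (fun t : ℝ => Real.exp (-t)) (-Real.exp (-t)) t := by
      simpa using ((hasDerivAt_id t).neg).exp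
    refine (h1.mul h2).congr_deriv ?_
    ring
  rw [intervalIntegral.integral_eq_sub_of_hasDerivAt hderiv (by
    apply Continuous.intervalIntegrable; continuity)]
  simp [Real.exp_zero]
  ring

lemma myJ2 (a : ℝ) (ha : 0 ≤ a) :
    ∫ t in Set.Ioi (0:ℝ), Real.exp (-t) * (max (a - t) 0) ^ 2
      = a ^ 2 - 2 * a + 2 - 2 * Real.exp (-a) := by
  have hsplit : Set.Ioc (0:ℝ) a ∪ Set.Ioi a = Set.Ioi 0 := Set.Ioc_union_Ioi_eq_Ioi ha
  have hcont : Continuous (fun t : ℝ => Real.exp (-t) * (a - t) ^ 2) := by continuity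
  have hint1 : IntegrableOn (fun t : ℝ => Real.exp (-t) * (max (a - t) 0) ^ 2) (Set.Ioc 0 a) := by
    apply (hcont.integrableOn_Ioc).congr_fun (fun t ht => ?_) measurableSet_Ioc
    simp only [max_eq_left (by linarith [ht.2] : (0:ℝ) ≤ a - t)]
  have hzero : Set.EqOn (fun t : ℝ => Real.exp (-t) * (max (a - t) 0) ^ 2) (fun _ => (0:ℝ))
      (Set.Ioi a) := by
    intro t ht
    simp only [Set.mem_Ioi] at ht
    simp [max_eq_right (by linarith : a - t ≤ (0:ℝ))]
  have hint2 : IntegrableOn (fun t : ℝ => Real.exp (-t) * (max (a - t) 0) ^ 2) (Set.Ioi a) :=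
    (integrableOn_zero).congr_fun (fun t ht => (hzero ht).symm) measurableSet_Ioi
  rw [← hsplit, setIntegral_union (Set.Ioc_disjoint_Ioi le_rfl) measurableSet_Ioi hint1 hint2,
    setIntegral_congr_fun measurableSet_Ioi hzero]
  simp only [integral_zero, add_zero]
  have : ∫ t in Set.Ioc (0:ℝ) a, Real.exp (-t) * (max (a - t) 0) ^ 2
      = ∫ t in (0:ℝ)..a, Real.exp (-t) * (a - t) ^ 2 := by
    rw [intervalIntegral.integral_of_le ha]
    apply setIntegral_congr_fun measurableSet_Ioc
    intro t ht
    simp only [max_eq_left (by linarith [ht.2] : (0:ℝ) ≤ a - t)]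
  rw [this]
  have hderiv : ∀ t ∈ Set.uIcc (0:ℝ) a,
      HasDerivAt (fun t : ℝ => -((a - t) ^ 2 - 2 * (a - t) + 2) * Real.exp (-t))
        (Real.exp (-t) * (a - t) ^ 2) t := by
    intro t _
    have h1 : HasDerivAt (fun t : ℝ => -((a - t) ^ 2 - 2 * (a - t) + 2))
        (2 * (a - t) - 2) t := by
      have : HasDerivAt (fun t : ℝ => a - t) (-1) t := by
        simpa [sub_eq_neg_add] using (hasDerivAt_id t).neg.add_const a
      have := (((this.pow 2).sub (this.const_mul 2)).add_const 2).neg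
      refine this.congr_deriv ?_
      push_cast
      ring
    have h2 : HasDerivAt (fun t : ℝ => Real.exp (-t)) (-Real.exp (-t)) t := by
      simpa using ((hasDerivAt_id t).neg).exp
    refine (h1.mul h2).congr_deriv ?_
    ring
  rw [intervalIntegral.integral_eq_sub_of_hasDerivAt hderiv (by
    apply Continuous.intervalIntegrable; continuity)]
  simp [Real.exp_zero]
  ring
theorem variance_and_bias_fbar
    {Ω : Type*} [MeasureSpace Ω] [IsProbabilityMeasure (ℙ : Measure Ω)]
    (x lam : ℝ) (hx : x ∈ Set.Icc (0:ℝ) 1) (hlam : 0 < lam)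
    (EL ER : Ω → ℝ) (hEL : Measurable EL) (hER : Measurable ER)
    (hindep : IndepFun EL ER ℙ)
    (hdL : Measure.map EL ℙ = expMeasure 1) (hdR : Measure.map ER ℙ = expMeasure 1) :
    (variance (fun ω => 1 + (max (x - lam⁻¹ * EL ω) 0 + min (x + lam⁻¹ * ER ω) 1) / 2) ℙ
        = 1 / (4 * lam ^ 2) * (2 - 2 * lam * x * Real.exp (-(lam * x))
            - 2 * lam * (1 - x) * Real.exp (-(lam * (1 - x)))
            - Real.exp (-(2 * lam * x)) - Real.exp (-(2 * lam * (1 - x))))) ∧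
      (∫ ω, ((1 + (max (x - lam⁻¹ * EL ω) 0 + min (x + lam⁻¹ * ER ω) 1) / 2) - (1 + x)) ^ 2 ∂ℙ
        = 1 / (2 * lam ^ 2) * (1 - lam * x * Real.exp (-(lam * x))
            - lam * (1 - x) * Real.exp (-(lam * (1 - x))) - Real.exp (-lam))) := by
  obtain ⟨hx0, hx1⟩ := hx
  have hlam' : lam ≠ 0 := ne_of_gt hlam
  rw [show -(2 * lam * x) = -(lam * x) + -(lam * x) by ring, Real.exp_add,
    show -(2 * lam * (1 - x)) = -(lam * (1 - x)) + -(lam * (1 - x)) by ring, Real.exp_add,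
    show -lam = -(lam * x) + -(lam * (1 - x)) by ring, Real.exp_add]
  set a : ℝ := lam * x with ha_def
  set b : ℝ := lam * (1 - x) with hb_def
  have ha : 0 ≤ a := mul_nonneg hlam.le hx0
  have hb : 0 ≤ b := mul_nonneg hlam.le (by linarith)
  set P : Ω → ℝ := fun ω => max (a - EL ω) 0 with hP_def
  set Q : Ω → ℝ := fun ω => max (b - ER ω) 0 with hQ_def
  have hPm : Measurable P := (measurable_const.sub hEL).max measurable_const
  have hQm : Measurable Q := (measurable_const.sub hER).max measurable_const
  -- a.e. nonnegativity of EL, ER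
  have haemap : ∀ (E : Ω → ℝ), Measurable E → Measure.map E ℙ = expMeasure 1 →
      ∀ᵐ ω ∂(ℙ : Measure Ω), 0 ≤ E ω := by
    intro E hE hd
    have h0 : (ℙ : Measure Ω) (E ⁻¹' Set.Iio 0) = 0 := by
      rw [← Measure.map_apply hE measurableSet_Iio, hd]
      show MeasureTheory.Measure.withDensity volume (gammaPDF 1 1) (Set.Iio 0) = 0
      rw [withDensity_apply _ measurableSet_Iio]
      exact lintegral_gammaPDF_of_nonpos le_rfl
    rw [ae_iff]
    convert h0 using 2
    ext ω
    simp [not_le]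
  have hEL0 := haemap EL hEL hdL
  have hER0 := haemap ER hER hdR
  -- MemLp
  have hPmem : MemLp P 2 ℙ := by
    refine memLp_of_bounded (a := 0) (b := a) ?_ hPm.aestronglyMeasurable 2
    filter_upwards [hEL0] with ω h0
    exact ⟨le_max_right _ _, max_le (by linarith) ha⟩
  have hQmem : MemLp Q 2 ℙ := by
    refine memLp_of_bounded (a := 0) (b := b) ?_ hQm.aestronglyMeasurable 2
    filter_upwards [hER0] with ω h0
    exact ⟨le_max_right _ _, max_le (by linarith) hb⟩
  have intP : Integrable P ℙ := hPmem.integrable one_le_two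
  have intQ : Integrable Q ℙ := hQmem.integrable one_le_two
  have intP2 : Integrable (fun ω => P ω ^ 2) ℙ := hPmem.integrable_sq
  have intQ2 : Integrable (fun ω => Q ω ^ 2) ℙ := hQmem.integrable_sq
  have hindepPQ : IndepFun P Q ℙ :=
    hindep.comp (f := EL) (g := ER)
      ((measurable_const.sub measurable_id).max measurable_const)
      ((measurable_const.sub measurable_id).max measurable_const)
  have intPQ : Integrable (fun ω => P ω * Q ω) ℙ := hindepPQ.integrable_mul intP intQ
  -- moments
  have hmom : ∀ (E : Ω → ℝ), Measurable E → Measure.map E ℙ = expMeasure 1 → ∀ c : ℝ, 0 ≤ c →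
      (∫ ω, max (c - E ω) 0 ∂ℙ = c - 1 + Real.exp (-c)) ∧
      (∫ ω, (max (c - E ω) 0) ^ 2 ∂ℙ = c ^ 2 - 2 * c + 2 - 2 * Real.exp (-c)) := by
    intro E hE hd c hc
    have hm1 : Measurable (fun t : ℝ => max (c - t) 0) :=
      (measurable_const.sub measurable_id).max measurable_const
    constructor
    · have h := integral_map (μ := (ℙ : Measure Ω)) (φ := E) (f := fun t => max (c - t) 0)
        hE.aemeasurable hm1.aestronglyMeasurable
      rw [hd, myexp_integral _ hm1, myJ1 c hc] at h
      exact h.symm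
    · have h := integral_map (μ := (ℙ : Measure Ω)) (φ := E) (f := fun t => (max (c - t) 0) ^ 2)
        hE.aemeasurable (hm1.pow_const 2).aestronglyMeasurable
      rw [hd, myexp_integral _ (hm1.pow_const 2), myJ2 c hc] at h
      exact h.symm
  obtain ⟨hP1', hP2'⟩ := hmom EL hEL hdL a ha
  obtain ⟨hQ1', hQ2'⟩ := hmom ER hER hdR b hb
  have hP1 : ∫ ω, P ω ∂ℙ = a - 1 + Real.exp (-a) := hP1'
  have hP2 : ∫ ω, P ω ^ 2 ∂ℙ = a ^ 2 - 2 * a + 2 - 2 * Real.exp (-a) := hP2'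
  have hQ1 : ∫ ω, Q ω ∂ℙ = b - 1 + Real.exp (-b) := hQ1'
  have hQ2 : ∫ ω, Q ω ^ 2 ∂ℙ = b ^ 2 - 2 * b + 2 - 2 * Real.exp (-b) := hQ2'
  have hPQ1 : ∫ ω, P ω * Q ω ∂ℙ = (a - 1 + Real.exp (-a)) * (b - 1 + Real.exp (-b)) := by
    have := hindepPQ.integral_mul_eq_mul_integral hPm.aestronglyMeasurable hQm.aestronglyMeasurable
    rw [← hP1, ← hQ1]
    exact this
  -- the function
  set X : Ω → ℝ := fun ω => 3 / 2 + (2 * lam)⁻¹ * (P ω - Q ω) with hX_def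
  have hXrw : (fun ω => 1 + (max (x - lam⁻¹ * EL ω) 0 + min (x + lam⁻¹ * ER ω) 1) / 2) = X := by
    funext ω
    have e1 : max (x - lam⁻¹ * EL ω) 0 = lam⁻¹ * P ω := by
      have h := mul_max_of_nonneg (a - EL ω) 0 (inv_nonneg.mpr hlam.le)
      rw [mul_zero] at h
      show max (x - lam⁻¹ * EL ω) 0 = lam⁻¹ * max (a - EL ω) 0
      rw [h, show lam⁻¹ * (a - EL ω) = x - lam⁻¹ * EL ω by
        rw [ha_def]; field_simp]
    have e2 : min (x + lam⁻¹ * ER ω) 1 = 1 - lam⁻¹ * Q ω := by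
      have key : ∀ u : ℝ, min u 1 = 1 - max (1 - u) 0 := by
        intro u
        rcases le_total u 1 with h | h
        · rw [min_eq_left h, max_eq_left (by linarith)]; ring
        · rw [min_eq_right h, max_eq_right (by linarith)]; ring
      rw [key]
      have h := mul_max_of_nonneg (b - ER ω) 0 (inv_nonneg.mpr hlam.le)
      rw [mul_zero] at h
      show 1 - max (1 - (x + lam⁻¹ * ER ω)) 0 = 1 - lam⁻¹ * max (b - ER ω) 0
      rw [h, show lam⁻¹ * (b - ER ω) = 1 - (x + lam⁻¹ * ER ω) by
        rw [hb_def]; field_simp; ring]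
    rw [e1, e2, hX_def]
    field_simp
    ring
  have hXmem : MemLp X 2 ℙ := by
    have : MemLp (fun ω => (3:ℝ) / 2 + (2 * lam)⁻¹ * (P ω - Q ω)) 2 ℙ :=
      (memLp_const ((3:ℝ)/2)).add ((hPmem.sub hQmem).const_mul ((2 * lam)⁻¹))
    exact this
  have intX : Integrable X ℙ := hXmem.integrable one_le_two
  have intX2 : Integrable (fun ω => X ω ^ 2) ℙ := hXmem.integrable_sq
  -- first moment of X
  have m1 : ∫ ω, X ω ∂ℙ
      = 3 / 2 + (2 * lam)⁻¹ * ((a - 1 + Real.exp (-a)) - (b - 1 + Real.exp (-b))) := by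
    have iD : Integrable (fun ω => P ω - Q ω) ℙ := intP.sub intQ
    have i1 : Integrable (fun ω => (2 * lam)⁻¹ * (P ω - Q ω)) ℙ := iD.const_mul _
    show ∫ ω, 3 / 2 + (2 * lam)⁻¹ * (P ω - Q ω) ∂ℙ = _
    rw [integral_add (integrable_const _) i1, integral_const,
      integral_const_mul, integral_sub intP intQ, hP1, hQ1]
    simp
  -- second moment of X
  have m2 : ∫ ω, X ω ^ 2 ∂ℙ
      = 9 / 4 + 3 * (2 * lam)⁻¹ * ((a - 1 + Real.exp (-a)) - (b - 1 + Real.exp (-b)))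
        + ((2 * lam)⁻¹) ^ 2 * ((a ^ 2 - 2 * a + 2 - 2 * Real.exp (-a))
          - 2 * ((a - 1 + Real.exp (-a)) * (b - 1 + Real.exp (-b)))
          + (b ^ 2 - 2 * b + 2 - 2 * Real.exp (-b))) := by
    have hpt : ∀ ω, X ω ^ 2 = 9 / 4 + 3 * (2 * lam)⁻¹ * (P ω - Q ω)
        + ((2 * lam)⁻¹) ^ 2 * (P ω ^ 2 - 2 * (P ω * Q ω) + Q ω ^ 2) := by
      intro ω; rw [hX_def]; ring
    simp_rw [hpt]
    have iD : Integrable (fun ω => P ω - Q ω) ℙ := intP.sub intQ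
    have i1 : Integrable (fun ω => 3 * (2 * lam)⁻¹ * (P ω - Q ω)) ℙ := iD.const_mul _
    have i2a : Integrable (fun ω => 2 * (P ω * Q ω)) ℙ := intPQ.const_mul 2
    have i2b : Integrable (fun ω => P ω ^ 2 - 2 * (P ω * Q ω)) ℙ := intP2.sub i2a
    have i2 : Integrable (fun ω => P ω ^ 2 - 2 * (P ω * Q ω) + Q ω ^ 2) ℙ := i2b.add intQ2
    have i2' : Integrable (fun ω => ((2 * lam)⁻¹) ^ 2
        * (P ω ^ 2 - 2 * (P ω * Q ω) + Q ω ^ 2)) ℙ := i2.const_mul _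
    have i0 : Integrable (fun ω => 9 / 4 + 3 * (2 * lam)⁻¹ * (P ω - Q ω)) ℙ :=
      (integrable_const _).add i1
    rw [integral_add i0 i2',
      integral_add (integrable_const _) i1, integral_const, integral_const_mul,
      integral_const_mul, integral_sub intP intQ,
      integral_add i2b intQ2,
      integral_sub intP2 i2a, integral_const_mul,
      hP1, hQ1, hP2, hQ2, hPQ1]
    simp
  rw [hXrw]
  constructor
  · rw [variance_eq_sub hXmem]
    have : (∫ ω, (X ^ 2) ω ∂ℙ) = ∫ ω, X ω ^ 2 ∂ℙ := by simp [Pi.pow_apply]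
    rw [this, m2, m1]
    field_simp
    ring
  · have hXa : ∀ ω, 1 + (max (x - lam⁻¹ * EL ω) 0 + min (x + lam⁻¹ * ER ω) 1) / 2 = X ω :=
      fun ω => congrFun hXrw ω
    have hpt : ∀ ω, ((1 + (max (x - lam⁻¹ * EL ω) 0 + min (x + lam⁻¹ * ER ω) 1) / 2)
          - (1 + x)) ^ 2
        = X ω ^ 2 - (2 * (1 + x)) * X ω + (1 + x) ^ 2 := by
      intro ω; rw [hXa ω]; ring
    simp_rw [hpt]
    have iX1 : Integrable (fun ω => (2 * (1 + x)) * X ω) ℙ := intX.const_mul _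
    have iX2 : Integrable (fun ω => X ω ^ 2 - (2 * (1 + x)) * X ω) ℙ := intX2.sub iX1
    rw [integral_add iX2 (integrable_const _),
      integral_sub intX2 iX1, integral_const_mul, m2, m1, integral_const]
    simp only [measure_univ, probReal_univ, ENNReal.toReal_one, one_smul, smul_eq_mul]
    rw [show x = a / lam by rw [ha_def]; field_simp]
    field_simp
    ring
end

section
/- For λ > 0, the integral over x ∈ [0,1] of (1/(2λ^2))(1 - λx e^{-λx} - λ(1-x)e^{-λ(1-x)} - e^{-λ}) equals (1/(2λ^2))(1 - 2/λ + e^{-λ} + (2/λ)e^{-λ}), and for λ ≥ 6 this quantity is at least 1/(3λ^2). -/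
open Real intervalIntegral

theorem integrated_bias_mondrian_tree
    (lam : ℝ) (hlam : 0 < lam) :
    (∫ x in (0:ℝ)..1,
        1 / (2 * lam ^ 2) * (1 - lam * x * Real.exp (-(lam * x))
          - lam * (1 - x) * Real.exp (-(lam * (1 - x))) - Real.exp (-lam))
      = 1 / (2 * lam ^ 2) * (1 - 2 / lam + Real.exp (-lam) + 2 / lam * Real.exp (-lam))) ∧
      (6 ≤ lam →
        1 / (3 * lam ^ 2)
          ≤ 1 / (2 * lam ^ 2) * (1 - 2 / lam + Real.exp (-lam) + 2 / lam * Real.exp (-lam))) := by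
  have hl2 : (0:ℝ) < lam ^ 2 := by positivity
  constructor
  · have key : ∀ x ∈ Set.uIcc (0:ℝ) 1,
        HasDerivAt (fun y => 1/(2*lam^2) * (y + (y+1/lam)*Real.exp (-(lam*y))
            - (1-y+1/lam)*Real.exp (-(lam*(1-y))) - y*Real.exp (-lam)))
          (1/(2*lam^2)*(1 - lam*x*Real.exp (-(lam*x))
            - lam*(1-x)*Real.exp (-(lam*(1-x))) - Real.exp (-lam))) x := by
      intro x _
      have he1 : HasDerivAt (fun y => Real.exp (-(lam*y))) (Real.exp (-(lam*x)) * (-lam)) x := by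
        have h : HasDerivAt (fun y : ℝ => -(lam*y)) (-lam) x := by
          simpa using ((hasDerivAt_id x).const_mul lam).fun_neg
        exact h.exp
      have he2 : HasDerivAt (fun y => Real.exp (-(lam*(1-y)))) (Real.exp (-(lam*(1-x))) * lam) x := by
        have h : HasDerivAt (fun y : ℝ => -(lam*(1-y))) lam x := by
          have h0 : HasDerivAt (fun y : ℝ => (1:ℝ)-y) (-1) x := by
            simpa using (hasDerivAt_const x (1:ℝ)).fun_sub (hasDerivAt_id x)
          simpa using (h0.const_mul lam).fun_neg
        exact h.exp
      have hA : HasDerivAt (fun y : ℝ => (y+1/lam)*Real.exp (-(lam*y)))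
          (1*Real.exp (-(lam*x)) + (x+1/lam)*(Real.exp (-(lam*x))*(-lam))) x :=
        ((hasDerivAt_id x).add_const (1/lam)).mul he1
      have hB : HasDerivAt (fun y : ℝ => (1-y+1/lam)*Real.exp (-(lam*(1-y))))
          ((-1)*Real.exp (-(lam*(1-x))) + (1-x+1/lam)*(Real.exp (-(lam*(1-x)))*lam)) x := by
        have hg : HasDerivAt (fun y : ℝ => 1-y+1/lam) (-1) x := by
          simpa using (((hasDerivAt_const x (1:ℝ)).sub (hasDerivAt_id x)).add_const (1/lam))
        exact hg.mul he2
      have h1 := (((hasDerivAt_id x).add hA).sub hB).sub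
        ((hasDerivAt_id x).mul_const (Real.exp (-lam)))
      have h2 := h1.const_mul (1/(2*lam^2))
      refine h2.congr_deriv ?_
      field_simp
      ring
    have hint : IntervalIntegrable (fun x => 1/(2*lam^2)*(1 - lam*x*Real.exp (-(lam*x))
        - lam*(1-x)*Real.exp (-(lam*(1-x))) - Real.exp (-lam))) MeasureTheory.volume 0 1 := by
      apply Continuous.intervalIntegrable
      fun_prop
    have := intervalIntegral.integral_eq_sub_of_hasDerivAt key hint
    rw [this]
    have h0 : Real.exp (-(lam*(1-(0:ℝ)))) = Real.exp (-lam) := by norm_num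
    have h1 : Real.exp (-(lam*(1:ℝ))) = Real.exp (-lam) := by norm_num
    simp only [mul_one, mul_zero, zero_add, h0, h1, sub_self, neg_zero, Real.exp_zero]
    field_simp
    ring
  · intro h6
    set E := Real.exp (-lam) with hEdef
    have hE : 0 ≤ E := (Real.exp_pos _).le
    have e1 : 1/(2*lam^2) * (1 - 2/lam + E + 2/lam*E) = (lam - 2 + lam*E + 2*E)/(2*lam^3) := by
      field_simp
    rw [e1, div_le_div_iff₀ (by positivity) (by positivity)]
    nlinarith [mul_nonneg hl2.le (sub_nonneg.2 h6), mul_nonneg (mul_nonneg hl2.le hlam.le) hE,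
      mul_nonneg hl2.le hE]
end
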